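/- Let p be a prime, let b ≥ 1 and c ≥ 2 be integers, and let α, β be integers with gcd(αβ, p) = 1. Then the classical Kloosterman sum S(α, β p^b; p^c) = 0. -/

import Mathlib

open scoped BigOperators

/-- `e(x) = exp(2 π i x)`. -/
noncomputable def eC (x : ℝ) : ℂ := Complex.exp (2 * Real.pi * Complex.I * x)

/-- The GL(3) long-element Kloosterman sum `S(m₁,m₂,n₁,n₂;D₁,D₂)`.
Since the summand is independent of the admissible choices of `Y₁,Z₁,Y₂,Z₂`
(and each admissible `(B₁,C₁)` has exactly `D₁` admissible pairs `(Y₁,Z₁)` modulo `D₁`,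
similarly for `(Y₂,Z₂)`), we define the sum by averaging over all admissible choices. -/
noncomputable def SGL3 (m1 m2 n1 n2 : ℤ) (D1 D2 : ℕ) : ℂ :=
  ((D1 : ℂ) * (D2 : ℂ))⁻¹ *
    ∑ B1 ∈ Finset.range D1, ∑ C1 ∈ Finset.range D1,
      ∑ B2 ∈ Finset.range D2, ∑ C2 ∈ Finset.range D2,
        ∑ Y1 ∈ Finset.range D1, ∑ Z1 ∈ Finset.range D1,
          ∑ Y2 ∈ Finset.range D2, ∑ Z2 ∈ Finset.range D2,
            if Nat.gcd B1 (Nat.gcd C1 D1) = 1 ∧ Nat.gcd B2 (Nat.gcd C2 D2) = 1 ∧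
                ((D1 : ℤ) * (D2 : ℤ)) ∣ ((D1 : ℤ) * (C2 : ℤ) + (B1 : ℤ) * (B2 : ℤ) + (C1 : ℤ) * (D2 : ℤ)) ∧
                (D1 : ℤ) ∣ ((Y1 : ℤ) * (B1 : ℤ) + (Z1 : ℤ) * (C1 : ℤ) - 1) ∧
                (D2 : ℤ) ∣ ((Y2 : ℤ) * (B2 : ℤ) + (Z2 : ℤ) * (C2 : ℤ) - 1) then
              eC (((m1 * (B1 : ℤ) + n1 * ((Y1 : ℤ) * (D2 : ℤ) - (Z1 : ℤ) * (B2 : ℤ)) : ℤ) : ℝ) / (D1 : ℝ)) *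
                eC (((m2 * (B2 : ℤ) + n2 * ((Y2 : ℤ) * (D1 : ℤ) - (Z2 : ℤ) * (B1 : ℤ)) : ℤ) : ℝ) / (D2 : ℝ))
            else 0

/-- The classical Kloosterman sum `S(m,n;c) = ∑_{x (c), (x,c)=1} e((m x + n x̄)/c)`. -/
noncomputable def Kl (m n : ℤ) (c : ℕ) : ℂ :=
  ∑ x ∈ Finset.range c,
    if Nat.gcd x c = 1 then
      eC (((m * (x : ℤ) + n * ((((x : ZMod c)⁻¹).val : ℕ) : ℤ) : ℤ) : ℝ) / (c : ℝ))
    else 0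

/-- The partial (middle two-variable) Fourier transform of the GL(3) Kloosterman sum. -/
noncomputable def Shat (a u t b : ℤ) (D1 D2 : ℕ) : ℂ :=
  ((D1 : ℂ) * (D2 : ℂ))⁻¹ *
    ∑ x ∈ Finset.range D1, ∑ y ∈ Finset.range D2,
      SGL3 a (y : ℤ) (x : ℤ) b D1 D2 * eC (((-((x : ℤ) * t) : ℤ) : ℝ) / (D1 : ℝ)) *
        eC (((-((y : ℤ) * u) : ℤ) : ℝ) / (D2 : ℝ))

/-- `R(t,D₁,D₂) = max_{(ab,D₁)=1} ∑_{u (D₂)} |Ŝ(a,u,bt,1,D₁,D₂)|`, realized as a supremum. -/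
noncomputable def Rfun (t : ℤ) (D1 D2 : ℕ) : ℝ :=
  sSup {r : ℝ | ∃ a b : ℤ, Int.gcd (a * b) D1 = 1 ∧
    r = ∑ u ∈ Finset.range D2, Norm.norm (Shat a (u : ℤ) (b * t) 1 D1 D2)}

/-- The quantity `M(β)` with outer sum over `q ≤ Q` and moduli `c ≤ X/q`. -/
noncomputable def Mgen (Q X : ℝ) (β : ℕ → ℂ) : ℝ :=
  ∑ q ∈ Finset.Icc 1 ⌊Q⌋₊, ∑ d1 ∈ q.divisors,
    ((d1 : ℝ) / (q : ℝ)) *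
      ∑ c ∈ Finset.Icc 1 ⌊X / (q : ℝ)⌋₊,
        if Nat.gcd c q = 1 then
          ∑ tt ∈ Finset.range c,
            if Nat.gcd tt c = 1 then
              (Norm.norm (∑ᶠ (n : ℕ) (_ : Nat.gcd n q = d1),
                β n * eC (((tt * n : ℕ) : ℝ) / (c : ℝ)))) ^ 2
            else 0
        else 0

/-- The bilinear form `𝒮 = ∑_{D₁,D₂,m,n} γ_{D₁,D₂} α_m β_n S(1,m,n,1;D₁,D₂)`. -/
noncomputable def Sbil (γ : ℕ → ℕ → ℂ) (α β : ℕ → ℂ) : ℂ :=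
  ∑ᶠ (D1 : ℕ) (D2 : ℕ) (m : ℕ) (n : ℕ),
    γ D1 D2 * α m * β n * SGL3 1 (m : ℤ) (n : ℤ) 1 D1 D2

/-- `‖β‖ = (∑_n |β_n|²)^{1/2}`. -/
noncomputable def seqNorm (β : ℕ → ℂ) : ℝ := Real.sqrt (∑ᶠ n : ℕ, Norm.norm (β n) ^ 2)



lemma sum_range_mul' {M : Type*} [AddCommMonoid M] (a b : ℕ) (f : ℕ → M) :
    ∑ z ∈ Finset.range (a * b), f z
      = ∑ x ∈ Finset.range a, ∑ y ∈ Finset.range b, f (x + a * y) := by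
  rcases Nat.eq_zero_or_pos a with rfl | ha
  · simp
  rw [← Finset.sum_product']
  refine Finset.sum_nbij' (fun z => (z % a, z / a)) (fun q => q.1 + a * q.2) ?_ ?_ ?_ ?_ ?_
  · intro z hz
    simp only [Finset.mem_range] at hz
    exact Finset.mem_product.mpr ⟨Finset.mem_range.mpr (Nat.mod_lt _ ha),
      Finset.mem_range.mpr ((Nat.div_lt_iff_lt_mul ha).mpr (by rw [mul_comm] at hz; exact hz))⟩
  · rintro ⟨x, y⟩ hq
    simp only [Finset.mem_product, Finset.mem_range] at hq
    simp only [Finset.mem_range]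
    calc x + a * y < a + a * y := by omega
    _ = a * (y + 1) := by ring
    _ ≤ a * b := Nat.mul_le_mul_left a hq.2
  · intro z _
    simp [Nat.mod_add_div]
  · rintro ⟨x, y⟩ hq
    simp only [Finset.mem_product, Finset.mem_range] at hq
    simp [Nat.add_mul_mod_self_left, Nat.mod_eq_of_lt hq.1, Nat.add_mul_div_left _ _ ha,
      Nat.div_eq_of_lt hq.1]
  · intro z _
    simp [Nat.mod_add_div]


lemma eC_add (x y : ℝ) : eC (x + y) = eC x * eC y := by
  unfold eC; rw [← Complex.exp_add]; push_cast; ring_nf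

lemma eC_int (k : ℤ) : eC k = 1 := by
  unfold eC
  rw [show (2 * Real.pi * Complex.I : ℂ) * ((k : ℝ) : ℂ) = (k : ℤ) * (2 * Real.pi * Complex.I) by
    push_cast; ring]
  exact Complex.exp_int_mul_two_pi_mul_I k

lemma eC_div_congr (N : ℕ) (hN : N ≠ 0) (a b : ℤ) (h : (N : ℤ) ∣ a - b) :
    eC ((a : ℝ) / N) = eC ((b : ℝ) / N) := by
  obtain ⟨k, hk⟩ := h
  have hNr : (N : ℝ) ≠ 0 := Nat.cast_ne_zero.mpr hN
  have h1 : (a : ℝ) = (b : ℝ) + (N : ℝ) * (k : ℝ) := by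
    exact_mod_cast congrArg (Int.cast : ℤ → ℝ) (by linarith : a = b + (N : ℤ) * k)
  have ha : (a : ℝ) / N = (b : ℝ) / N + ((k : ℤ) : ℝ) := by rw [h1]; field_simp
  rw [ha, eC_add, eC_int, mul_one]

lemma sum_eC_eq_zero (p : ℕ) (hp : 1 < p) (α : ℤ) (hα : ¬ (p : ℤ) ∣ α) :
    ∑ y ∈ Finset.range p, eC (((α * (y : ℤ) : ℤ) : ℝ) / p) = 0 := by
  have hpr : (p : ℝ) ≠ 0 := Nat.cast_ne_zero.mpr (by omega)
  have hpc : (p : ℂ) ≠ 0 := Nat.cast_ne_zero.mpr (by omega)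
  set ζ : ℂ := eC ((α : ℝ) / p) with hζ
  have hpow : ∀ y : ℕ, eC (((α * (y : ℤ) : ℤ) : ℝ) / p) = ζ ^ y := by
    intro y
    rw [hζ]
    unfold eC
    rw [← Complex.exp_nat_mul]
    congr 1
    push_cast
    field_simp
  have hζp : ζ ^ p = 1 := by
    rw [hζ]; unfold eC
    rw [← Complex.exp_nat_mul]
    rw [show (p : ℂ) * (2 * Real.pi * Complex.I * (((α : ℝ) / p : ℝ) : ℂ)) =
        (α : ℤ) * (2 * Real.pi * Complex.I) by push_cast; field_simp]
    exact Complex.exp_int_mul_two_pi_mul_I α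
  have hζ1 : ζ ≠ 1 := by
    intro h1
    rw [hζ] at h1
    unfold eC at h1
    rw [Complex.exp_eq_one_iff] at h1
    obtain ⟨n, hn⟩ := h1
    have hne : (2 * (Real.pi : ℂ) * Complex.I) ≠ 0 := by
      simp [Real.pi_ne_zero, Complex.I_ne_zero]
    have h2 : (((α : ℝ) / p : ℝ) : ℂ) = (n : ℂ) :=
      mul_left_cancel₀ hne (hn.trans (by ring))
    have h3 : (α : ℝ) / p = (n : ℝ) := by exact_mod_cast h2
    apply hα
    refine ⟨n, ?_⟩
    have : (α : ℝ) = (p : ℝ) * n := by field_simp at h3; linarith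
    exact_mod_cast this
  calc ∑ y ∈ Finset.range p, eC (((α * (y : ℤ) : ℤ) : ℝ) / p)
      = ∑ y ∈ Finset.range p, ζ ^ y := Finset.sum_congr rfl fun y _ => hpow y
  _ = (ζ ^ p - 1) / (ζ - 1) := geom_sum_eq hζ1 p
  _ = 0 := by rw [hζp]; simp


lemma inv_val_modeq (a N : ℕ) (hdvd : a ∣ N) [NeZero N] (z x : ℕ)
    (hz : Nat.gcd z N = 1) (hx : Nat.gcd x N = 1) (hcong : (z : ZMod a) = (x : ZMod a)) :
    (((z : ZMod N)⁻¹).val) ≡ (((x : ZMod N)⁻¹).val) [MOD a] := by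
  have huz : IsUnit ((z : ZMod N)) := (ZMod.isUnit_iff_coprime z N).mpr hz
  have hux : IsUnit ((x : ZMod N)) := (ZMod.isUnit_iff_coprime x N).mpr hx
  have hz1 : (z : ZMod N)⁻¹ * z = 1 := ZMod.inv_mul_of_unit _ huz
  have hx1 : (x : ZMod N)⁻¹ * x = 1 := ZMod.inv_mul_of_unit _ hux
  set φ := ZMod.castHom hdvd (ZMod a) with hφ
  have e1 : φ ((z : ZMod N)⁻¹) * (z : ZMod a) = 1 := by
    have := congrArg φ hz1
    simpa [map_mul, map_natCast] using this
  have e2 : φ ((x : ZMod N)⁻¹) * (x : ZMod a) = 1 := by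
    have := congrArg φ hx1
    simpa [map_mul, map_natCast] using this
  have heq : φ ((z : ZMod N)⁻¹) = φ ((x : ZMod N)⁻¹) := by
    calc φ ((z : ZMod N)⁻¹) = φ ((z : ZMod N)⁻¹) * (φ ((x : ZMod N)⁻¹) * (x : ZMod a)) := by
          rw [e2, mul_one]
    _ = φ ((x : ZMod N)⁻¹) * (φ ((z : ZMod N)⁻¹) * (x : ZMod a)) := by ring
    _ = φ ((x : ZMod N)⁻¹) * (φ ((z : ZMod N)⁻¹) * (z : ZMod a)) := by rw [hcong]
    _ = φ ((x : ZMod N)⁻¹) := by rw [e1, mul_one]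
  have hval : (((((z : ZMod N)⁻¹).val : ℕ)) : ZMod a) = ((((x : ZMod N)⁻¹).val : ℕ) : ZMod a) := by
    rw [ZMod.natCast_val, ZMod.natCast_val]
    simpa [hφ, ZMod.castHom_apply] using heq
  exact (ZMod.natCast_eq_natCast_iff _ _ _).mp hval

/-- Vanishing of classical Kloosterman sums: `S(α, β p^b; p^c) = 0` for `b ≥ 1`, `c ≥ 2`. -/
theorem kloosterman_vanishes (p : ℕ) (hp : p.Prime) (b c : ℕ) (hb : 1 ≤ b) (hc : 2 ≤ c)
    (α β : ℤ) (h : Int.gcd (α * β) p = 1) :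
    Kl α (β * (p : ℤ) ^ b) (p ^ c) = 0 := by
  have hp1 : 1 < p := hp.one_lt
  set n : ℤ := β * (p : ℤ) ^ b with hn
  set N : ℕ := p ^ c with hN
  set a : ℕ := p ^ (c - 1) with haa
  have hNa : N = a * p := by rw [hN, haa, ← pow_succ]; congr 1; omega
  have hNz : N ≠ 0 := by rw [hN]; positivity
  haveI : NeZero N := ⟨hNz⟩
  have haz : a ≠ 0 := by rw [haa]; positivity
  have hadvd : a ∣ N := hNa ▸ dvd_mul_right a p
  have hpa : p ∣ a := by rw [haa]; exact dvd_pow_self p (by omega)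
  have hpα : ¬ (p : ℤ) ∣ α := by
    intro hd
    have hcop : IsCoprime α (p : ℤ) := by
      have := Int.isCoprime_iff_gcd_eq_one.mpr h
      exact IsCoprime.of_mul_left_left this
    have : IsUnit ((p : ℤ)) := hcop.isUnit_of_dvd' hd dvd_rfl
    rw [Int.isUnit_iff] at this
    omega
  unfold Kl
  rw [show Finset.range N = Finset.range (a * p) by rw [hNa]]
  rw [sum_range_mul']
  apply Finset.sum_eq_zero
  intro x hx
  by_cases hgx : Nat.Coprime x p
  · -- coprime case
    have hcopz : ∀ y : ℕ, Nat.gcd (x + a * y) N = 1 := by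
      intro y
      obtain ⟨a', ha'⟩ := hpa
      have h1 : Nat.Coprime (x + p * (a' * y)) p :=
        (Nat.coprime_add_mul_left_left x p (a' * y)).mpr hgx
      have h2 : Nat.Coprime (x + a * y) p := by
        rwa [show x + a * y = x + p * (a' * y) by rw [ha']; ring]
      rw [hN]
      exact Nat.Coprime.pow_right c h2
    have hcopx : Nat.gcd x N = 1 := by
      rw [hN]; exact Nat.Coprime.pow_right c hgx
    set vx : ℤ := ((((x : ZMod N)⁻¹).val : ℕ) : ℤ) with hvx
    have key : ∀ y ∈ Finset.range p,
        (if Nat.gcd (x + a * y) N = 1 then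
          eC (((α * ((x + a * y : ℕ) : ℤ) +
            n * ((((x + a * y : ℕ) : ZMod N)⁻¹).val : ℤ) : ℤ) : ℝ) / (N : ℝ))
        else 0)
        = eC (((α * (x : ℤ) + n * vx : ℤ) : ℝ) / (N : ℝ)) *
            eC (((α * (y : ℤ) : ℤ) : ℝ) / (p : ℝ)) := by
      intro y hy
      rw [if_pos (hcopz y)]
      set z : ℕ := x + a * y with hz
      set vz : ℤ := ((((z : ZMod N)⁻¹).val : ℕ) : ℤ) with hvz
      have hfrac : ((α * (y : ℤ) : ℤ) : ℝ) / (p : ℝ)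
          = ((α * (y : ℤ) * (a : ℤ) : ℤ) : ℝ) / (N : ℝ) := by
        have hpr : (p : ℝ) ≠ 0 := Nat.cast_ne_zero.mpr (by omega)
        have har : (a : ℝ) ≠ 0 := Nat.cast_ne_zero.mpr haz
        rw [hNa]
        push_cast
        field_simp
      rw [hfrac, ← eC_add]
      have hsum : ((α * (x : ℤ) + n * vx : ℤ) : ℝ) / (N : ℝ)
          + ((α * (y : ℤ) * (a : ℤ) : ℤ) : ℝ) / (N : ℝ)
          = (((α * (x : ℤ) + n * vx + α * (y : ℤ) * (a : ℤ)) : ℤ) : ℝ) / (N : ℝ) := by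
        push_cast
        ring
      rw [hsum]
      apply eC_div_congr N hNz
      have hdiff : α * ((z : ℕ) : ℤ) + n * vz - (α * (x : ℤ) + n * vx + α * (y : ℤ) * (a : ℤ))
          = n * (vz - vx) := by
        rw [hz]
        push_cast
        ring
      rw [hdiff]
      have hcong : ((z : ℕ) : ZMod a) = ((x : ℕ) : ZMod a) := by
        rw [hz]
        push_cast
        simp [ZMod.natCast_self]
      have hmod : (((z : ZMod N)⁻¹).val) ≡ (((x : ZMod N)⁻¹).val) [MOD a] :=
        inv_val_modeq a N hadvd z x (hcopz y) hcopx hcong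
      have hdvd2 : (a : ℤ) ∣ vz - vx := by
        have := (Int.natCast_modEq_iff.mpr hmod).dvd
        rw [hvz, hvx]
        exact (dvd_sub_comm).mp this
      obtain ⟨k, hk⟩ := hdvd2
      refine ⟨β * (p : ℤ) ^ (b - 1) * k, ?_⟩
      have hpb : (p : ℤ) ^ b = (p : ℤ) * (p : ℤ) ^ (b - 1) := by
        rw [← pow_succ']; congr 1; omega
      rw [hk, hn, hNa, hpb]
      push_cast
      ring
    rw [Finset.sum_congr rfl key, ← Finset.mul_sum, sum_eC_eq_zero p hp1 α hpα, mul_zero]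
  · -- non-coprime case: every term has non-coprime gcd condition
    apply Finset.sum_eq_zero
    intro y _
    rw [if_neg]
    intro hg1
    have hpx : p ∣ x := by
      by_contra hnd
      exact hgx (Nat.coprime_comm.mp ((Nat.Prime.coprime_iff_not_dvd hp).mpr hnd))
    have h1 : p ∣ x + a * y := dvd_add hpx (Dvd.dvd.mul_right hpa y)
    have h2 : p ∣ N := by rw [hNa]; exact dvd_mul_left p a
    have h3 : p ∣ Nat.gcd (x + a * y) N := Nat.dvd_gcd h1 h2
    rw [hg1] at h3
    have := Nat.le_of_dvd one_pos h3
    omega
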